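/- If f and g are convex nonnegative functions on [a,b] with a < b, then (1/(b-a)) ∫_a^b f(x)g(x) dx ≤ (1/3)M(a,b) + (1/6)N(a,b), where M(a,b) = f(a)g(a)+f(b)g(b) and N(a,b) = f(a)g(b)+f(b)g(a). -/

import Mathlib

open intervalIntegral

theorem pachpatte_first (a b : ℝ) (hab : a < b) (f g : ℝ → ℝ)
    (hf : ConvexOn ℝ (Set.Icc a b) f) (hg : ConvexOn ℝ (Set.Icc a b) g)
    (hf0 : ∀ x ∈ Set.Icc a b, 0 ≤ f x) (hg0 : ∀ x ∈ Set.Icc a b, 0 ≤ g x)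
    (hint : IntervalIntegrable (fun x => f x * g x) MeasureTheory.volume a b) :
    (1 / (b - a)) * ∫ x in a..b, f x * g x ≤
      (1 / 3) * (f a * g a + f b * g b) + (1 / 6) * (f a * g b + f b * g a) := by
  have hd : (0:ℝ) < b - a := by linarith
  set φ : ℝ → ℝ := fun x =>
    (f a * g a / (b-a)^2) * (b - x)^2
    + ((f a * g b + f b * g a) / (b-a)^2) * ((b - x) * (x - a))
    + (f b * g b / (b-a)^2) * (x - a)^2 with hφ
  -- pointwise bound
  have hpt : ∀ x ∈ Set.Icc a b, f x * g x ≤ φ x := by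
    intro x hx
    have ht0 : 0 ≤ (b - x)/(b-a) := div_nonneg (by linarith [hx.2]) hd.le
    have hs0 : 0 ≤ (x - a)/(b-a) := div_nonneg (by linarith [hx.1]) hd.le
    have hts : (b - x)/(b-a) + (x - a)/(b-a) = 1 := by field_simp; ring
    have hx' : ((b - x)/(b-a)) * a + ((x - a)/(b-a)) * b = x := by
      field_simp; ring
    have hfx : f x ≤ ((b - x)/(b-a)) * f a + ((x - a)/(b-a)) * f b := by
      have := hf.2 (Set.left_mem_Icc.mpr hab.le) (Set.right_mem_Icc.mpr hab.le) ht0 hs0 hts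
      simpa [smul_eq_mul, hx'] using this
    have hgx : g x ≤ ((b - x)/(b-a)) * g a + ((x - a)/(b-a)) * g b := by
      have := hg.2 (Set.left_mem_Icc.mpr hab.le) (Set.right_mem_Icc.mpr hab.le) ht0 hs0 hts
      simpa [smul_eq_mul, hx'] using this
    have hfa := hf0 a (Set.left_mem_Icc.mpr hab.le)
    have hfb := hf0 b (Set.right_mem_Icc.mpr hab.le)
    have hga := hg0 a (Set.left_mem_Icc.mpr hab.le)
    have hgb := hg0 b (Set.right_mem_Icc.mpr hab.le)
    have hmul : f x * g x ≤
        (((b - x)/(b-a)) * f a + ((x - a)/(b-a)) * f b) *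
        (((b - x)/(b-a)) * g a + ((x - a)/(b-a)) * g b) := by
      apply mul_le_mul hfx hgx (hg0 x hx)
      positivity
    refine hmul.trans_eq ?_
    simp only [hφ]
    field_simp
    ring
  -- integrability of φ
  have hφcont : Continuous φ := by simp only [hφ]; continuity
  have hφint : IntervalIntegrable φ MeasureTheory.volume a b :=
    hφcont.intervalIntegrable a b
  have hmono : (∫ x in a..b, f x * g x) ≤ ∫ x in a..b, φ x :=
    intervalIntegral.integral_mono_on hab.le hint hφint hpt
  -- compute ∫ φ
  have h3 : (∫ x in a..b, (x - a)^2) = (b-a)^3/3 := by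
    have := intervalIntegral.integral_comp_sub_right (a := a) (b := b) (fun x => x^2) a
    rw [this]
    simp [integral_pow]
    ring
  have h1 : (∫ x in a..b, (b - x)^2) = (b-a)^3/3 := by
    have := intervalIntegral.integral_comp_sub_left (a := a) (b := b) (fun x => x^2) b
    rw [this]
    simp [integral_pow]
    ring
  have hlin : (∫ x in a..b, (x - a)) = (b-a)^2/2 := by
    have := intervalIntegral.integral_comp_sub_right (a := a) (b := b) (fun x => x) a
    rw [this]
    simp [integral_id]
  have h2 : (∫ x in a..b, (b - x) * (x - a)) = (b-a)^3/6 := by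
    have heq : ∀ x : ℝ, (b - x) * (x - a) = (b - a) * (x - a) - (x - a)^2 := by
      intro x; ring
    simp_rw [heq]
    rw [intervalIntegral.integral_sub (by apply Continuous.intervalIntegrable; fun_prop)
      (by apply Continuous.intervalIntegrable; fun_prop),
      intervalIntegral.integral_const_mul, hlin, h3]
    ring
  have hφval : (∫ x in a..b, φ x)
      = (f a * g a / (b-a)^2) * ((b-a)^3/3)
        + ((f a * g b + f b * g a) / (b-a)^2) * ((b-a)^3/6)
        + (f b * g b / (b-a)^2) * ((b-a)^3/3) := by
    simp only [hφ]
    rw [intervalIntegral.integral_add (by apply Continuous.intervalIntegrable; fun_prop)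
        (by apply Continuous.intervalIntegrable; fun_prop),
      intervalIntegral.integral_add (by apply Continuous.intervalIntegrable; fun_prop)
        (by apply Continuous.intervalIntegrable; fun_prop),
      intervalIntegral.integral_const_mul, intervalIntegral.integral_const_mul,
      intervalIntegral.integral_const_mul, h1, h2, h3]
  have hfin : (1 / (b - a)) * ∫ x in a..b, φ x
      = (1 / 3) * (f a * g a + f b * g b) + (1 / 6) * (f a * g b + f b * g a) := by
    rw [hφval]
    field_simp
    ring
  calc (1 / (b - a)) * ∫ x in a..b, f x * g x
      ≤ (1 / (b - a)) * ∫ x in a..b, φ x := by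
        apply mul_le_mul_of_nonneg_left hmono (by positivity)
    _ = _ := hfin
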